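/- Let n ≥ 1, A ∈ ℂ^{n×n}, and p = (p₀,p₁,p₂) ∈ ℝ³ with (p₁,p₂) ≠ (0,0). Let d = n − rank(p₀·I_n + p₁·Re A + p₂·Im A) be the corank of the Hermitian matrix p₀·I_n + p₁·Re A + p₂·Im A. Then: (1) for every q ∈ ℝ³, the binary form f_A(r·q + s·p) ∈ ℝ[r,s] is divisible by r^d; and (2) for q = (1,0,0), the binary form f_A(r·q + s·p) is not divisible by r^{d+1}. Hence d is the maximum integer such that r^d divides f_A(r·q + s·p) for every q ∈ ℝ³. -/

import Mathlib

open Matrix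

noncomputable section

/-- The Hermitian real part `(A + Aᴴ)/2` of a complex matrix. -/
def ReM {n : ℕ} (A : Matrix (Fin n) (Fin n) ℂ) : Matrix (Fin n) (Fin n) ℂ :=
  (2⁻¹ : ℂ) • (A + Aᴴ)

/-- The Hermitian imaginary part `(A - Aᴴ)/(2i)` of a complex matrix. -/
def ImM {n : ℕ} (A : Matrix (Fin n) (Fin n) ℂ) : Matrix (Fin n) (Fin n) ℂ :=
  ((2 * Complex.I)⁻¹ : ℂ) • (A - Aᴴ)

/-- The `k`-th largest eigenvalue (for `1 ≤ k ≤ n`) of a Hermitian `n × n` matrix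
(with junk value `0` for non-Hermitian input): the eigenvalues sorted in increasing
order, evaluated at index `n - k`. -/
def kthEig {n : ℕ} (M : Matrix (Fin n) (Fin n) ℂ) (k : ℕ) : ℝ :=
  if hM : M.IsHermitian then
    if h : n - k < n then (hM.eigenvalues ∘ Tuple.sort hM.eigenvalues) ⟨n - k, h⟩ else 0
  else 0

/-- `λ_k(x,y) = λ_k(x·Re A + y·Im A)`. -/
def lamXY {n : ℕ} (A : Matrix (Fin n) (Fin n) ℂ) (k : ℕ) (x y : ℝ) : ℝ :=
  kthEig ((x : ℂ) • ReM A + (y : ℂ) • ImM A) k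

/-- `λ_k(θ) = λ_k(cos θ · Re A + sin θ · Im A)`. -/
def lamTheta {n : ℕ} (A : Matrix (Fin n) (Fin n) ℂ) (k : ℕ) (θ : ℝ) : ℝ :=
  lamXY A k (Real.cos θ) (Real.sin θ)

/-- The rank-`k` numerical range, via the Li–Sze halfplane description:
`Λ_k(A) = {a + ib : a cos θ + b sin θ ≤ λ_k(θ) for all θ}`. -/
def NumRange {n : ℕ} (A : Matrix (Fin n) (Fin n) ℂ) (k : ℕ) : Set ℂ :=
  {z : ℂ | ∀ θ : ℝ, z.re * Real.cos θ + z.im * Real.sin θ ≤ lamTheta A k θ}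

/-- The matrix pencil `v₀·I + v₁·Re A + v₂·Im A`. -/
def pencil {n : ℕ} (A : Matrix (Fin n) (Fin n) ℂ) (v : Fin 3 → ℝ) :
    Matrix (Fin n) (Fin n) ℂ :=
  (v 0 : ℂ) • (1 : Matrix (Fin n) (Fin n) ℂ) + (v 1 : ℂ) • ReM A + (v 2 : ℂ) • ImM A

open MvPolynomial in
/-- The binary form `f(r·q + s·p) ∈ ℝ[r,s]` obtained by restricting `f ∈ ℝ[t,x,y]`
to the line spanned by `q` and `p` (variable `X 0 = r`, `X 1 = s`). -/
def substLine (f : MvPolynomial (Fin 3) ℝ) (q p : Fin 3 → ℝ) : MvPolynomial (Fin 2) ℝ :=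
  aeval (fun i => C (q i) * X 0 + C (p i) * X 1) f

open MvPolynomial

lemma X0_pow_dvd_iff {R : Type*} [CommRing R] {e : ℕ} {f : MvPolynomial (Fin 2) R} :
    (X 0 : MvPolynomial (Fin 2) R) ^ e ∣ f ↔
      ∀ m : Fin 2 →₀ ℕ, m 0 < e → MvPolynomial.coeff m f = 0 := by
  constructor
  · intro hdvd m hm
    have h2 : (Polynomial.X : Polynomial (MvPolynomial (Fin 1) R)) ^ e ∣ finSuccEquiv R 1 f := by
      obtain ⟨g, rfl⟩ := hdvd
      exact ⟨finSuccEquiv R 1 g, by rw [_root_.map_mul, _root_.map_pow, finSuccEquiv_X_zero]⟩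
    rw [Polynomial.X_pow_dvd_iff] at h2
    have h3 := h2 (m 0) hm
    calc MvPolynomial.coeff m f
        = MvPolynomial.coeff (Finsupp.cons (m 0) (Finsupp.tail m)) f := by rw [Finsupp.cons_tail]
      _ = MvPolynomial.coeff (Finsupp.tail m) ((finSuccEquiv R 1 f).coeff (m 0)) :=
          (finSuccEquiv_coeff_coeff _ _ _).symm
      _ = 0 := by rw [h3, coeff_zero]
  · intro h
    have h2 : (Polynomial.X : Polynomial (MvPolynomial (Fin 1) R)) ^ e ∣ finSuccEquiv R 1 f := by
      rw [Polynomial.X_pow_dvd_iff]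
      intro i hi
      apply MvPolynomial.ext
      intro m'
      rw [finSuccEquiv_coeff_coeff, coeff_zero]
      exact h (m'.cons i) (by simpa [Finsupp.cons_zero] using hi)
    obtain ⟨g, hg⟩ := h2
    refine ⟨(finSuccEquiv R 1).symm g, ?_⟩
    apply (finSuccEquiv R 1).injective
    rw [_root_.map_mul, _root_.map_pow, finSuccEquiv_X_zero, AlgEquiv.apply_symm_apply, hg]

lemma det_dvd_pow {R : Type*} [CommRing R] {n : ℕ} (N : Matrix (Fin n) (Fin n) R) (x : R)
    (Z : Finset (Fin n)) (h : ∀ i ∈ Z, ∀ j, x ∣ N i j) : x ^ Z.card ∣ N.det := by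
  rw [Matrix.det_apply]
  apply Finset.dvd_sum
  intro σ _
  have h1 : x ^ Z.card ∣ ∏ i, N (σ i) i := by
    have h2 : x ^ Z.card ∣ ∏ i ∈ Z.image σ.symm, N (σ i) i := by
      rw [← Finset.card_image_of_injective Z σ.symm.injective, ← Finset.prod_const]
      refine Finset.prod_dvd_prod_of_dvd _ _ (fun i hi => ?_)
      obtain ⟨z, hz, rfl⟩ := Finset.mem_image.mp hi
      rw [Equiv.apply_symm_apply]
      exact h z hz _
    exact h2.trans (Finset.prod_dvd_prod_of_subset _ _ _ (Finset.subset_univ _))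
  rw [Units.smul_def, zsmul_eq_mul]
  exact h1.mul_left _

lemma evalR {k : ℕ} (g : MvPolynomial (Fin k) ℝ) (v : Fin k → ℝ) :
    eval (fun i => (v i : ℂ)) (MvPolynomial.map (algebraMap ℝ ℂ) g) = ((eval v g : ℝ) : ℂ) := by
  have hcomp : ((eval (fun i => (v i : ℂ))).comp (MvPolynomial.map (algebraMap ℝ ℂ)))
      = (Complex.ofRealHom.comp (eval v)) := by
    apply MvPolynomial.ringHom_ext
    · intro r; simp
    · intro i; simp
  exact RingHom.congr_fun hcomp g

lemma mv_complex_funext {k : ℕ} {F G : MvPolynomial (Fin k) ℂ}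
    (h : ∀ v : Fin k → ℝ, eval (fun i => (v i : ℂ)) F = eval (fun i => (v i : ℂ)) G) :
    F = G := by
  suffices hz : ∀ H : MvPolynomial (Fin k) ℂ,
      (∀ v : Fin k → ℝ, eval (fun i => (v i : ℂ)) H = 0) → H = 0 by
    have := hz (F - G) (fun v => by rw [map_sub, h, sub_self])
    exact sub_eq_zero.mp this
  intro H h0
  set rp : MvPolynomial (Fin k) ℝ :=
    ∑ m ∈ H.support, monomial m ((H.coeff m).re) with hrp
  set ip : MvPolynomial (Fin k) ℝ :=
    ∑ m ∈ H.support, monomial m ((H.coeff m).im) with hip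
  have hcr : ∀ m, rp.coeff m = (H.coeff m).re := by
    intro m
    rw [hrp, coeff_sum]
    simp only [coeff_monomial]
    rw [Finset.sum_ite_eq' H.support m (fun m' => (H.coeff m').re)]
    split_ifs with hmem
    · rfl
    · rw [MvPolynomial.notMem_support_iff.mp hmem, Complex.zero_re]
  have hci : ∀ m, ip.coeff m = (H.coeff m).im := by
    intro m
    rw [hip, coeff_sum]
    simp only [coeff_monomial]
    rw [Finset.sum_ite_eq' H.support m (fun m' => (H.coeff m').im)]
    split_ifs with hmem
    · rfl
    · rw [MvPolynomial.notMem_support_iff.mp hmem, Complex.zero_im]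
  have hH : MvPolynomial.map (algebraMap ℝ ℂ) rp
      + C Complex.I * MvPolynomial.map (algebraMap ℝ ℂ) ip = H := by
    apply MvPolynomial.ext
    intro m
    rw [coeff_add, coeff_C_mul, coeff_map, coeff_map, hcr, hci]
    simpa [mul_comm] using Complex.re_add_im (H.coeff m)
  have heval : ∀ v : Fin k → ℝ, eval v rp = 0 ∧ eval v ip = 0 := by
    intro v
    have := h0 v
    rw [← hH, map_add, _root_.map_mul, evalR, evalR, eval_C] at this
    constructor
    · simpa using congrArg Complex.re this
    · simpa using congrArg Complex.im this
  have hrz : rp = 0 := MvPolynomial.funext (fun v => by rw [(heval v).1, map_zero])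
  have hiz : ip = 0 := MvPolynomial.funext (fun v => by rw [(heval v).2, map_zero])
  rw [← hH, hrz, hiz]; simp

lemma ReM_herm {n : ℕ} (A : Matrix (Fin n) (Fin n) ℂ) : (ReM A).IsHermitian := by
  show _ᴴ = _
  unfold ReM
  rw [conjTranspose_smul, conjTranspose_add, conjTranspose_conjTranspose, add_comm]
  congr 1
  simp

lemma ImM_herm {n : ℕ} (A : Matrix (Fin n) (Fin n) ℂ) : (ImM A).IsHermitian := by
  show _ᴴ = _
  unfold ImM
  rw [conjTranspose_smul, conjTranspose_sub, conjTranspose_conjTranspose]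
  rw [show star ((2 * Complex.I)⁻¹ : ℂ) = -(2 * Complex.I)⁻¹ by
    simp [Complex.star_def, map_inv₀, _root_.map_mul, Complex.conj_I, mul_neg, inv_neg]]
  rw [neg_smul, ← smul_neg, neg_sub]

lemma pencil_herm {n : ℕ} (A : Matrix (Fin n) (Fin n) ℂ) (v : Fin 3 → ℝ) :
    (pencil A v).IsHermitian := by
  show _ᴴ = _
  unfold pencil
  simp [conjTranspose_add, conjTranspose_smul, conjTranspose_one,
    (ReM_herm A).eq, (ImM_herm A).eq, Complex.star_def, Complex.conj_ofReal]

lemma pencil_comb {n : ℕ} (A : Matrix (Fin n) (Fin n) ℂ) (q p : Fin 3 → ℝ) (a b : ℝ) :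
    pencil A (fun i => q i * a + p i * b)
      = (a : ℂ) • pencil A q + (b : ℂ) • pencil A p := by
  unfold pencil
  push_cast
  module

lemma pencil_e0 {n : ℕ} (A : Matrix (Fin n) (Fin n) ℂ) :
    pencil A ![1, 0, 0] = 1 := by
  unfold pencil
  norm_num
  simp

lemma eval_substLine (f : MvPolynomial (Fin 3) ℝ) (q p : Fin 3 → ℝ) (w : Fin 2 → ℝ) :
    eval w (substLine f q p) = eval (fun i => q i * w 0 + p i * w 1) f := by
  have h1 : ∀ (g : MvPolynomial (Fin 3) ℝ) (u : Fin 3 → ℝ), aeval u g = eval u g := by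
    intro g u
    rw [aeval_eq_eval₂Hom, Algebra.algebraMap_self]
    rfl
  have h2 : ∀ (g : MvPolynomial (Fin 2) ℝ), aeval w g = eval w g := by
    intro g
    rw [aeval_eq_eval₂Hom, Algebra.algebraMap_self]
    rfl
  rw [← h1, ← h2, substLine, comp_aeval_apply]
  have h3 : (fun i => aeval w (C (q i) * X 0 + C (p i) * X 1))
      = fun i => q i * w 0 + p i * w 1 := by
    funext i
    simp
  rw [h3]

/-- Let `d = n − rank(p₀ I + p₁ Re A + p₂ Im A)` be the corank of the
pencil at `p`. Then `r^d` divides `f_A(r·q + s·p)` for every `q`, `r^{d+1}` does not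
divide it for `q = (1,0,0)`, and hence `d` is the maximal such exponent. -/
theorem stmt19 {n : ℕ} (hn : 1 ≤ n)
    (A : Matrix (Fin n) (Fin n) ℂ)
    (fA : MvPolynomial (Fin 3) ℝ)
    (hfA : ∀ v : Fin 3 → ℝ, ((eval v fA : ℝ) : ℂ) = (pencil A v).det)
    (p : Fin 3 → ℝ) (hp : (p 1, p 2) ≠ (0, 0)) :
    (∀ q : Fin 3 → ℝ,
      (X 0 : MvPolynomial (Fin 2) ℝ) ^ (n - (pencil A p).rank) ∣ substLine fA q p) ∧
    ¬ ((X 0 : MvPolynomial (Fin 2) ℝ) ^ (n - (pencil A p).rank + 1) ∣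
        substLine fA ![1, 0, 0] p) ∧
    (∀ e : ℕ,
      (∀ q : Fin 3 → ℝ, (X 0 : MvPolynomial (Fin 2) ℝ) ^ e ∣ substLine fA q p) →
      e ≤ n - (pencil A p).rank) := by
  classical
  set M := pencil A p with hMdef
  have hM : M.IsHermitian := pencil_herm A p
  set U : Matrix (Fin n) (Fin n) ℂ := (hM.eigenvectorUnitary : Matrix (Fin n) (Fin n) ℂ) with hU
  have hUU : star U * U = 1 := Unitary.coe_star_mul_self hM.eigenvectorUnitary
  set ev : Fin n → ℝ := hM.eigenvalues with hev
  set Dm : Matrix (Fin n) (Fin n) ℂ := diagonal (fun i => ((ev i : ℝ) : ℂ)) with hDmdef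
  have hDm' : star U * M * U = Dm := by
    have h := hM.conjStarAlgAut_star_eigenvectorUnitary
    rw [Unitary.conjStarAlgAut_star_apply] at h
    rw [h]
    rfl
  have hdetconj : ∀ (Xm : Matrix (Fin n) (Fin n) ℂ), (star U * Xm * U).det = Xm.det := by
    intro Xm
    have h1 : (star U).det * U.det = 1 := by rw [← Matrix.det_mul, hUU, Matrix.det_one]
    rw [Matrix.det_mul, Matrix.det_mul]
    linear_combination Xm.det * h1
  have key : ∀ (Q : Matrix (Fin n) (Fin n) ℂ) (r s : ℂ),
      star U * (r • Q + s • M) * U = r • (star U * Q * U) + s • Dm := by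
    intro Q r s
    rw [Matrix.mul_add, Matrix.add_mul, Matrix.mul_smul, Matrix.mul_smul,
      Matrix.smul_mul, Matrix.smul_mul, hDm']
  set Z : Finset (Fin n) := Finset.univ.filter (fun i => ev i = 0) with hZ
  have hrank : Z.card = n - M.rank := by
    have h1 : Z.card + (Finset.univ.filter (fun i => ¬ ev i = 0)).card = n := by
      rw [hZ, Finset.card_filter_add_card_filter_not, Finset.card_univ, Fintype.card_fin]
    have h2 : M.rank = (Finset.univ.filter (fun i => ¬ ev i = 0)).card := by
      rw [hM.rank_eq_card_non_zero_eigs, Fintype.card_subtype]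
    omega
  -- Part 1
  have claim1 : ∀ q : Fin 3 → ℝ,
      (X 0 : MvPolynomial (Fin 2) ℝ) ^ Z.card ∣ substLine fA q p := by
    intro q
    set Q : Matrix (Fin n) (Fin n) ℂ := pencil A q with hQ
    set B : Matrix (Fin n) (Fin n) ℂ := star U * Q * U with hB
    set N : Matrix (Fin n) (Fin n) (MvPolynomial (Fin 2) ℂ) :=
      Matrix.of (fun i j => X 0 * C (B i j) + X 1 * C (Dm i j)) with hN
    have hNmap : ∀ w : Fin 2 → ℝ,
        N.map (eval (fun i => ((w i : ℝ) : ℂ))) = (w 0 : ℂ) • B + (w 1 : ℂ) • Dm := by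
      intro w
      ext i j
      simp [hN, Matrix.map_apply, Matrix.add_apply, Matrix.smul_apply, smul_eq_mul]
    have hc1 : MvPolynomial.map (algebraMap ℝ ℂ) (substLine fA q p) = N.det := by
      apply mv_complex_funext
      intro w
      rw [evalR, eval_substLine, hfA, pencil_comb, ← hMdef, ← hQ,
        RingHom.map_det (eval (fun i => ((w i : ℝ) : ℂ))) N, RingHom.mapMatrix_apply, hNmap w, hB,
        ← key Q ((w 0 : ℝ) : ℂ) ((w 1 : ℝ) : ℂ), hdetconj]
    have hdvdC : (X 0 : MvPolynomial (Fin 2) ℂ) ^ Z.card ∣ N.det := by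
      apply det_dvd_pow N (X 0) Z
      intro i hi j
      have hev0 : ev i = 0 := (Finset.mem_filter.mp hi).2
      have hDm0 : Dm i j = 0 := by
        rw [hDmdef]
        by_cases hij : i = j
        · subst hij; simp [Matrix.diagonal_apply_eq, hev0]
        · simp [Matrix.diagonal_apply_ne _ hij]
      show (X 0 : MvPolynomial (Fin 2) ℂ) ∣ X 0 * C (B i j) + X 1 * C (Dm i j)
      rw [hDm0, map_zero, mul_zero, add_zero]
      exact dvd_mul_right _ _
    rw [X0_pow_dvd_iff]
    intro m hm
    have h1 : MvPolynomial.coeff m (MvPolynomial.map (algebraMap ℝ ℂ) (substLine fA q p)) = 0 := by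
      rw [hc1]
      exact X0_pow_dvd_iff.mp hdvdC m hm
    rw [MvPolynomial.coeff_map] at h1
    exact (map_eq_zero_iff _ (algebraMap ℝ ℂ).injective).mp h1
  -- Part 2
  have heq : substLine fA ![1, 0, 0] p
      = ∏ i : Fin n, ((X 0 : MvPolynomial (Fin 2) ℝ) + C (ev i) * X 1) := by
    apply MvPolynomial.funext
    intro w
    apply Complex.ofReal_injective
    show ((eval w (substLine fA ![1, 0, 0] p) : ℝ) : ℂ) = _
    rw [eval_substLine, hfA, pencil_comb, pencil_e0, ← hMdef,
      ← hdetconj (((w 0 : ℝ) : ℂ) • 1 + ((w 1 : ℝ) : ℂ) • M),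
      key 1 ((w 0 : ℝ) : ℂ) ((w 1 : ℝ) : ℂ),
      show star U * (1 : Matrix (Fin n) (Fin n) ℂ) * U = 1 by rw [mul_one, hUU]]
    have hdiag : ((w 0 : ℝ) : ℂ) • (1 : Matrix (Fin n) (Fin n) ℂ) + ((w 1 : ℝ) : ℂ) • Dm
        = diagonal (fun i => ((w 0 : ℝ) : ℂ) + ((w 1 : ℝ) : ℂ) * ((ev i : ℝ) : ℂ)) := by
      ext i j
      rcases eq_or_ne i j with rfl | hij
      · simp [hDmdef, Matrix.add_apply, Matrix.smul_apply, Matrix.one_apply_eq,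
          Matrix.diagonal_apply_eq, smul_eq_mul]
      · simp [hDmdef, Matrix.add_apply, Matrix.smul_apply, Matrix.one_apply_ne hij,
          Matrix.diagonal_apply_ne _ hij, smul_eq_mul]
    rw [hdiag, Matrix.det_diagonal, map_prod, Complex.ofReal_prod]
    refine Finset.prod_congr rfl (fun i _ => ?_)
    simp
    push_cast
    ring
  have part2 : ¬ ((X 0 : MvPolynomial (Fin 2) ℝ) ^ (n - M.rank + 1) ∣
      substLine fA ![1, 0, 0] p) := by
    have hsplit : (∏ i : Fin n, ((X 0 : MvPolynomial (Fin 2) ℝ) + C (ev i) * X 1))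
        = X 0 ^ Z.card * ∏ i ∈ Finset.univ.filter (fun i => ¬ ev i = 0),
            ((X 0 : MvPolynomial (Fin 2) ℝ) + C (ev i) * X 1) := by
      rw [← Finset.prod_filter_mul_prod_filter_not Finset.univ (fun i => ev i = 0)]
      congr 1
      rw [show (∏ i ∈ Z, ((X 0 : MvPolynomial (Fin 2) ℝ) + C (ev i) * X 1))
          = ∏ _i ∈ Z, (X 0 : MvPolynomial (Fin 2) ℝ) from
        Finset.prod_congr rfl (fun i hi => by
          rw [(Finset.mem_filter.mp hi).2]; simp), Finset.prod_const]
    rw [heq, hsplit, ← hrank]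
    intro hdvd
    rw [pow_succ] at hdvd
    have hX0 : (X 0 : MvPolynomial (Fin 2) ℝ) ^ Z.card ≠ 0 :=
      pow_ne_zero _ (MvPolynomial.X_ne_zero 0)
    have hdvd2 : (X 0 : MvPolynomial (Fin 2) ℝ) ∣
        ∏ i ∈ Finset.univ.filter (fun i => ¬ ev i = 0),
          ((X 0 : MvPolynomial (Fin 2) ℝ) + C (ev i) * X 1) :=
      (mul_dvd_mul_iff_left hX0).mp hdvd
    obtain ⟨k, hk⟩ := hdvd2
    have hz : eval ![0, 1] (∏ i ∈ Finset.univ.filter (fun i => ¬ ev i = 0),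
        ((X 0 : MvPolynomial (Fin 2) ℝ) + C (ev i) * X 1)) = 0 := by
      rw [hk]; simp
    rw [map_prod] at hz
    have h3 : (∏ i ∈ Finset.univ.filter (fun i => ¬ ev i = 0), ev i) = 0 := by
      simpa using hz
    obtain ⟨i, hi, hzero⟩ := Finset.prod_eq_zero_iff.mp h3
    exact (Finset.mem_filter.mp hi).2 hzero
  refine ⟨fun q => hrank ▸ claim1 q, part2, ?_⟩
  intro e he
  by_contra hlt
  push_neg at hlt
  exact part2 ((pow_dvd_pow _ (by omega)).trans (he ![1, 0, 0]))


end
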